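/- Second-order accuracy of the second family of adaptive rational weights: let α ≥ 0 and let f be twice continuously differentiable on a compact interval I ⊆ ℝ. There exist constants M > 0 and h₀ > 0 such that for every 0 < h < h₀, every x₀ ∈ ℝ, and every integer j with [x_{j−2}, x_{j+1}] ⊆ I, one has |ω_{2,0}·f(x_{j−1}) + ω_{2,1}·f(x_j) − f(x_{j-1/2})| ≤ M·h², where, with D = 2 + α·Σ_{s=0}^{1}((f(x_{j−1}) − f(x_{j+1−3s}))² + (f(x_j) − f(x_{j+1−3s}))²), ω_{2,0} = (1 + α·((f(x_{j−1}) − f(x_{j+1}))² + (f(x_j) − f(x_{j+1}))²))/D and ω_{2,1} = (1 + α·((f(x_{j−1}) − f(x_{j−2}))² + (f(x_j) − f(x_{j−2}))²))/D. -/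

import Mathlib

/-- The node `x_m = x₀ + m·h`. -/
noncomputable def nd (h x₀ : ℝ) (m : ℤ) : ℝ := x₀ + (m : ℝ) * h

/-- The common denominator
`D = 2 + α·Σ_{s=0}^{1}((f(x_{j-1}) − f(x_{j+1-3s}))² + (f(x_j) − f(x_{j+1-3s}))²)`. -/
noncomputable def D2 (α h x₀ : ℝ) (j : ℤ) (f : ℝ → ℝ) : ℝ :=
  2 + α * ∑ s ∈ Finset.range 2,
    ((f (nd h x₀ (j - 1)) - f (nd h x₀ (j + 1 - 3 * (s : ℤ)))) ^ 2 +
      (f (nd h x₀ j) - f (nd h x₀ (j + 1 - 3 * (s : ℤ)))) ^ 2)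

lemma D2_eq (α h x₀ : ℝ) (j : ℤ) (f : ℝ → ℝ) :
    D2 α h x₀ j f =
      (1 + α * ((f (nd h x₀ (j - 1)) - f (nd h x₀ (j + 1))) ^ 2 +
        (f (nd h x₀ j) - f (nd h x₀ (j + 1))) ^ 2)) +
      (1 + α * ((f (nd h x₀ (j - 1)) - f (nd h x₀ (j - 2))) ^ 2 +
        (f (nd h x₀ j) - f (nd h x₀ (j - 2))) ^ 2)) := by
  have e1 : j + 1 - 3 * ((0 : ℕ) : ℤ) = j + 1 := by push_cast; ring
  have e2 : j + 1 - 3 * ((1 : ℕ) : ℤ) = j - 2 := by push_cast; ring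
  rw [D2, Finset.sum_range_succ, Finset.sum_range_one, e1, e2]
  ring

set_option maxHeartbeats 2000000 in
/-- Second-order accuracy of the second family of adaptive rational weights `ω_{2,0}, ω_{2,1}`. -/
theorem rational_weights_second_family_order_two (α : ℝ) (hα : 0 ≤ α) (A B : ℝ) (f : ℝ → ℝ)
    (hf : ContDiffOn ℝ 2 f (Set.Icc A B)) :
    ∃ M > 0, ∃ h₀ > 0, ∀ h : ℝ, 0 < h → h < h₀ → ∀ x₀ : ℝ, ∀ j : ℤ,
      Set.Icc (nd h x₀ (j - 2)) (nd h x₀ (j + 1)) ⊆ Set.Icc A B →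
      |((1 + α * ((f (nd h x₀ (j - 1)) - f (nd h x₀ (j + 1))) ^ 2 +
            (f (nd h x₀ j) - f (nd h x₀ (j + 1))) ^ 2)) / D2 α h x₀ j f) * f (nd h x₀ (j - 1)) +
          ((1 + α * ((f (nd h x₀ (j - 1)) - f (nd h x₀ (j - 2))) ^ 2 +
            (f (nd h x₀ j) - f (nd h x₀ (j - 2))) ^ 2)) / D2 α h x₀ j f) * f (nd h x₀ j) -
          f (x₀ + ((j : ℝ) - 1 / 2) * h)| ≤ M * h ^ 2 := by
  by_cases hAB : A < B
  swap
  · refine ⟨1, one_pos, 1, one_pos, fun h hh _ x₀ j hsub => absurd ?_ hAB⟩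
    have h1 := hsub (Set.left_mem_Icc.2 (by simp only [nd]; push_cast; nlinarith))
    have h2 := hsub (Set.right_mem_Icc.2 (by simp only [nd]; push_cast; nlinarith))
    have hlt : nd h x₀ (j - 2) < nd h x₀ (j + 1) := by
      simp only [nd]; push_cast; nlinarith
    exact lt_of_lt_of_le (lt_of_le_of_lt h1.1 hlt) h2.2
  · set I : Set ℝ := Set.Icc A B with hI
    have hU : UniqueDiffOn ℝ I := uniqueDiffOn_Icc hAB
    have hconv : Convex ℝ I := convex_Icc A B
    set f1 := derivWithin f I with hf1def
    have hf1 : ContDiffOn ℝ 1 f1 I := hf.derivWithin hU (by norm_num)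
    set f2 := derivWithin f1 I with hf2def
    have hf2cont : ContinuousOn f2 I := hf1.continuousOn_derivWithin hU le_rfl
    obtain ⟨L₀, hL₀⟩ := isCompact_Icc.exists_bound_of_continuousOn hf1.continuousOn
    obtain ⟨K₀, hK₀⟩ := isCompact_Icc.exists_bound_of_continuousOn hf2cont
    set L := max L₀ 1 with hLdef
    set K := max K₀ 1 with hKdef
    have hL1 : (1 : ℝ) ≤ L := le_max_right _ _
    have hK1 : (1 : ℝ) ≤ K := le_max_right _ _
    have hLb : ∀ x ∈ I, |f1 x| ≤ L := fun x hx => (hL₀ x hx).trans (le_max_left _ _)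
    have hKb : ∀ x ∈ I, |f2 x| ≤ K := fun x hx => (hK₀ x hx).trans (le_max_left _ _)
    have hfd : ∀ x ∈ I, HasDerivWithinAt f (f1 x) I x := fun x hx =>
      ((hf.differentiableOn (by norm_num)) x hx).hasDerivWithinAt
    have hf1d : ∀ x ∈ I, HasDerivWithinAt f1 (f2 x) I x := fun x hx =>
      ((hf1.differentiableOn one_ne_zero) x hx).hasDerivWithinAt
    have hLip : ∀ x ∈ I, ∀ y ∈ I, |f y - f x| ≤ L * |y - x| := fun x hx y hy =>
      hconv.norm_image_sub_le_of_norm_hasDerivWithin_le hfd hLb hx hy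
    have hLip1 : ∀ x ∈ I, ∀ y ∈ I, |f1 y - f1 x| ≤ K * |y - x| := fun x hx y hy =>
      hconv.norm_image_sub_le_of_norm_hasDerivWithin_le hf1d hKb hx hy
    clear_value f1 f2 L K
    refine ⟨K / 2 + 3 * α * L ^ 3 + 1, by positivity, 1, one_pos,
      fun h hh hh1 x₀ j hsub => ?_⟩
    set a := nd h x₀ (j - 1) with ha
    set b := nd h x₀ j with hb
    set p := nd h x₀ (j + 1) with hp
    set q := nd h x₀ (j - 2) with hq
    set m := x₀ + ((j : ℝ) - 1 / 2) * h with hm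
    have hab : b - a = h := by simp only [ha, hb, nd]; push_cast; ring
    have ham : m - a = h / 2 := by simp only [ha, hm, nd]; push_cast; ring
    have hbm : b - m = h / 2 := by simp only [hb, hm, nd]; push_cast; ring
    have hap : p - a = 2 * h := by simp only [ha, hp, nd]; push_cast; ring
    have hbp : p - b = h := by simp only [hb, hp, nd]; push_cast; ring
    have haq : a - q = h := by simp only [ha, hq, nd]; push_cast; ring
    have hbq : b - q = 2 * h := by simp only [hb, hq, nd]; push_cast; ring
    have hqp : p - q = 3 * h := by simp only [hp, hq, nd]; push_cast; ring
    clear_value a b p q m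
    have hqI : q ∈ I := hsub ⟨le_refl _, by linarith⟩
    have hpI : p ∈ I := hsub ⟨by linarith, le_refl _⟩
    have haI : a ∈ I := hsub ⟨by linarith, by linarith⟩
    have hbI : b ∈ I := hsub ⟨by linarith, by linarith⟩
    have hmI : m ∈ I := hsub ⟨by linarith, by linarith⟩
    -- midpoint estimate
    set s' := Set.Icc a b with hs'
    have hs'I : s' ⊆ I := Set.Icc_subset_Icc haI.1 hbI.2
    set g : ℝ → ℝ := fun x => f x - f1 m * x with hg
    have hgd : ∀ x ∈ s', HasDerivWithinAt g (f1 x - f1 m) s' x := by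
      intro x hx
      have h1 : HasDerivWithinAt f (f1 x) s' x := (hfd x (hs'I hx)).mono hs'I
      have h2 : HasDerivWithinAt (fun y => f1 m * y) (f1 m * 1) s' x :=
        (hasDerivWithinAt_id x s').const_mul (f1 m)
      have h3 := h1.sub h2
      rw [mul_one] at h3
      exact h3
    have hgb : ∀ x ∈ s', ‖f1 x - f1 m‖ ≤ K * (h / 2) := by
      intro x hx
      have h1 : |f1 x - f1 m| ≤ K * |x - m| := hLip1 m hmI x (hs'I hx)
      have h2 : |x - m| ≤ h / 2 := abs_le.2 ⟨by linarith [hx.1], by linarith [hx.2]⟩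
      calc |f1 x - f1 m| ≤ K * |x - m| := h1
        _ ≤ K * (h / 2) := by nlinarith [abs_nonneg (x - m)]
    have hma : m ∈ s' := ⟨by linarith, by linarith⟩
    have haa : a ∈ s' := ⟨le_refl _, by linarith⟩
    have hbb : b ∈ s' := ⟨by linarith, le_refl _⟩
    have est_a : |g a - g m| ≤ K * (h / 2) * (h / 2) := by
      have := (convex_Icc a b).norm_image_sub_le_of_norm_hasDerivWithin_le hgd hgb hma haa
      have e : ‖a - m‖ = h / 2 := by
        rw [Real.norm_eq_abs, abs_sub_comm, abs_of_nonneg (by linarith)]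
        linarith
      rw [e] at this; exact this
    have est_b : |g b - g m| ≤ K * (h / 2) * (h / 2) := by
      have := (convex_Icc a b).norm_image_sub_le_of_norm_hasDerivWithin_le hgd hgb hma hbb
      have e : ‖b - m‖ = h / 2 := by
        rw [Real.norm_eq_abs, abs_of_nonneg (by linarith)]; linarith
      rw [e] at this; exact this
    have habm : a + b - 2 * m = 0 := by linarith
    have hmid : |f a + f b - 2 * f m| ≤ K * h ^ 2 / 2 := by
      have e : f a + f b - 2 * f m = (g a - g m) + (g b - g m) := by
        simp only [hg]; linear_combination (f1 m) * habm
      rw [e]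
      calc |(g a - g m) + (g b - g m)| ≤ |g a - g m| + |g b - g m| := abs_add_le _ _
        _ ≤ K * (h / 2) * (h / 2) + K * (h / 2) * (h / 2) := add_le_add est_a est_b
        _ = K * h ^ 2 / 2 := by ring
    -- Lipschitz bounds on node differences
    have dap : |f a - f p| ≤ L * (2 * h) := by
      have := hLip p hpI a haI
      have e : |a - p| = 2 * h := by rw [abs_sub_comm, abs_of_nonneg (by linarith)]; linarith
      rwa [e] at this
    have dbp : |f b - f p| ≤ L * (2 * h) := by
      have := hLip p hpI b hbI
      have e : |b - p| = h := by rw [abs_sub_comm, abs_of_nonneg (by linarith)]; linarith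
      rw [e] at this; linarith [mul_pos (lt_of_lt_of_le one_pos hL1) hh]
    have daq : |f a - f q| ≤ L * (2 * h) := by
      have := hLip q hqI a haI
      have e : |a - q| = h := by rw [abs_of_nonneg (by linarith)]; linarith
      rw [e] at this; linarith [mul_pos (lt_of_lt_of_le one_pos hL1) hh]
    have dbq : |f b - f q| ≤ L * (2 * h) := by
      have := hLip q hqI b hbI
      have e : |b - q| = 2 * h := by rw [abs_of_nonneg (by linarith)]; linarith
      rwa [e] at this
    have dab : |f a - f b| ≤ L * h := by
      have := hLip b hbI a haI
      have e : |a - b| = h := by rw [abs_sub_comm, abs_of_nonneg (by linarith)]; linarith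
      rwa [e] at this
    -- numerators and denominator
    set N0 := 1 + α * ((f a - f p) ^ 2 + (f b - f p) ^ 2) with hN0
    set N1 := 1 + α * ((f a - f q) ^ 2 + (f b - f q) ^ 2) with hN1
    set Dd := D2 α h x₀ j f with hDd
    have hDsum : Dd = N0 + N1 := by
      rw [hN0, hN1, ha, hb, hp, hq, hDd]
      exact D2_eq α h x₀ j f
    have sq1 : (f a - f p) ^ 2 ≤ (L * (2 * h)) ^ 2 := by
      rw [← sq_abs (f a - f p)]; exact pow_le_pow_left₀ (abs_nonneg _) dap 2
    have sq2 : (f b - f p) ^ 2 ≤ (L * (2 * h)) ^ 2 := by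
      rw [← sq_abs (f b - f p)]; exact pow_le_pow_left₀ (abs_nonneg _) dbp 2
    have sq3 : (f a - f q) ^ 2 ≤ (L * (2 * h)) ^ 2 := by
      rw [← sq_abs (f a - f q)]; exact pow_le_pow_left₀ (abs_nonneg _) daq 2
    have sq4 : (f b - f q) ^ 2 ≤ (L * (2 * h)) ^ 2 := by
      rw [← sq_abs (f b - f q)]; exact pow_le_pow_left₀ (abs_nonneg _) dbq 2
    have hND : |N0 - N1| ≤ 8 * α * L ^ 2 * h ^ 2 := by
      have m1 := mul_le_mul_of_nonneg_left sq1 hα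
      have m2 := mul_le_mul_of_nonneg_left sq2 hα
      have m3 := mul_le_mul_of_nonneg_left sq3 hα
      have m4 := mul_le_mul_of_nonneg_left sq4 hα
      have n1 := mul_nonneg hα (sq_nonneg (f a - f p))
      have n2 := mul_nonneg hα (sq_nonneg (f b - f p))
      have n3 := mul_nonneg hα (sq_nonneg (f a - f q))
      have n4 := mul_nonneg hα (sq_nonneg (f b - f q))
      rw [hN0, hN1, abs_le]
      constructor <;> linarith
    have hD2le : 2 ≤ Dd := by
      have hN0' : 1 ≤ N0 := by
        rw [hN0]
        linarith [mul_nonneg hα (add_nonneg (sq_nonneg (f a - f p)) (sq_nonneg (f b - f p)))]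
      have hN1' : 1 ≤ N1 := by
        rw [hN1]
        linarith [mul_nonneg hα (add_nonneg (sq_nonneg (f a - f q)) (sq_nonneg (f b - f q)))]
      rw [hDsum]; linarith
    have hD0 : Dd ≠ 0 := by linarith
    clear_value N0 N1 Dd
    -- algebraic decomposition
    have key : N0 / Dd * f a + N1 / Dd * f b - f m
        = (f a + f b - 2 * f m) / 2 + (N0 - N1) / (2 * Dd) * (f a - f b) := by
      rw [hDsum]
      have hne : N0 + N1 ≠ 0 := by rw [← hDsum]; exact hD0
      field_simp
      ring
    rw [key]
    have hterm2 : |(N0 - N1) / (2 * Dd) * (f a - f b)| ≤ 2 * α * L ^ 3 * h ^ 3 := by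
      rw [abs_mul, abs_div]
      have habs2D : |2 * Dd| = 2 * Dd := abs_of_pos (by linarith)
      rw [habs2D]
      have nn1 : (0:ℝ) ≤ 8 * α * L ^ 2 * h ^ 2 := by
        have := mul_nonneg (mul_nonneg hα (sq_nonneg L)) (sq_nonneg h)
        linarith
      have step1 : |N0 - N1| / (2 * Dd) ≤ 8 * α * L ^ 2 * h ^ 2 / 4 :=
        div_le_div₀ nn1 hND (by norm_num) (by linarith)
      calc |N0 - N1| / (2 * Dd) * |f a - f b|
          ≤ 8 * α * L ^ 2 * h ^ 2 / 4 * (L * h) := by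
            apply mul_le_mul step1 dab (abs_nonneg _) (by linarith)
        _ = 2 * α * L ^ 3 * h ^ 3 := by ring
    calc |(f a + f b - 2 * f m) / 2 + (N0 - N1) / (2 * Dd) * (f a - f b)|
        ≤ |(f a + f b - 2 * f m) / 2| + |(N0 - N1) / (2 * Dd) * (f a - f b)| := abs_add_le _ _
      _ ≤ K * h ^ 2 / 2 / 2 + 2 * α * L ^ 3 * h ^ 3 := by
          rw [abs_div]
          have : |(2 : ℝ)| = 2 := by norm_num
          rw [this]
          exact add_le_add (by linarith [div_le_div_of_nonneg_right hmid (by norm_num : (0:ℝ) ≤ 2)]) hterm2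
      _ ≤ (K / 2 + 3 * α * L ^ 3 + 1) * h ^ 2 := by
          have e1 : 2 * α * L ^ 3 * h ^ 3 ≤ 2 * α * L ^ 3 * h ^ 2 := by
            have hL3 : (0:ℝ) ≤ α * L ^ 3 := mul_nonneg hα (by positivity)
            have : α * L ^ 3 * h ^ 3 ≤ α * L ^ 3 * h ^ 2 := by
              apply mul_le_mul_of_nonneg_left _ hL3
              calc h ^ 3 = h ^ 2 * h := by ring
                _ ≤ h ^ 2 * 1 := by
                    apply mul_le_mul_of_nonneg_left hh1.le (sq_nonneg h)
                _ = h ^ 2 := by ring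
            linarith
          have n1 : (0:ℝ) ≤ α * L ^ 3 * h ^ 2 :=
            mul_nonneg (mul_nonneg hα (pow_nonneg (by linarith) 3)) (sq_nonneg h)
          have n2 : (0:ℝ) ≤ K * h ^ 2 := mul_nonneg (by linarith) (sq_nonneg h)
          have n3 : (0:ℝ) ≤ h ^ 2 := sq_nonneg h
          linarith
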